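/- (Kummer curve, direction λ∞) Let 0 < λ₀ < λ∞. Define F_0(λ₀,λ∞) = ((λ∞+λ₀)²/2)·log(λ∞+λ₀) + ((λ∞−λ₀)²/2)·log(λ∞−λ₀) − 2λ₀²·log(2λ₀) − (3/2)(λ∞²−λ₀²), F_1(λ₀,λ∞) = −(1/12)·log((λ∞²−λ₀²)/λ₀), and F_g(λ₀,λ∞) = (B_{2g}/(2g(2g−2)))·( (λ₀+λ∞)^{2−2g} + (λ₀−λ∞)^{2−2g} − (2λ₀)^{2−2g} ) for g ≥ 2. Then for every integer n ≥ 1, Σ_{k=1}^{n} (2/(2k)!) · ∂_{λ∞}^{2k} F_{n−k}(λ₀,λ∞) = log((λ∞+λ₀)(λ∞−λ₀)) if n = 1, and = 0 if n ≥ 2. (That is, the free energy of the Kummer spectral curve satisfies F(λ₀, λ∞+ℏ) − 2F(λ₀,λ∞) + F(λ₀, λ∞−ℏ) = log((λ∞+λ₀)(λ∞−λ₀)) order by order in ℏ.) -/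

import Mathlib

lemma sum_range_even_odd {M : Type*} [AddCommMonoid M] (f : ℕ → M) (n : ℕ) :
    ∑ j ∈ Finset.range (2*n), f j = ∑ g ∈ Finset.range n, (f (2*g) + f (2*g+1)) := by
  induction n with
  | zero => simp
  | succ n ih =>
    have h : 2*(n+1) = (2*n)+1+1 := by ring
    rw [h, Finset.sum_range_succ, Finset.sum_range_succ, ih, Finset.sum_range_succ, add_assoc]

lemma bern_odd_zero (j : ℕ) (h : Odd j) (h1 : 1 < j) : bernoulli j = 0 := by
  rw [bernoulli_eq_bernoulli'_of_ne_one (by omega)]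
  exact bernoulli'_eq_zero_of_odd h h1

lemma bern_id (m : ℕ) :
    ∑ g ∈ Finset.range (m+2), ((2*g : ℚ) - 1) * ((2*(m+2)).choose (2*g)) * bernoulli (2*g) = 0 := by
  have h1 : ∑ j ∈ Finset.range (2*m+4), (((2*m+4).choose j : ℚ)) * bernoulli j = 0 := by
    rw [sum_bernoulli]; simp
  have h2 : ∑ j ∈ Finset.range (2*m+4), ((2*m+4:ℚ) - j) * ((2*m+4).choose j) * bernoulli j = 0 := by
    have key : ∀ j ∈ Finset.range (2*m+4), ((2*m+4:ℚ) - j) * ((2*m+4).choose j) * bernoulli j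
        = (2*m+4:ℚ) * (((2*m+3).choose j : ℚ) * bernoulli j) := by
      intro j hj
      rw [Finset.mem_range] at hj
      have h := Nat.choose_mul_succ_eq (2*m+3) j
      have h4 : ((2*m+3+1 - j : ℕ) : ℚ) = (2*m+4:ℚ) - j := by
        rw [Nat.cast_sub (by omega)]; push_cast; ring
      have hcast : ((2*m+3).choose j : ℚ) * (2*m+4) = ((2*m+4).choose j : ℚ) * ((2*m+4:ℚ) - j) := by
        calc ((2*m+3).choose j : ℚ) * (2*m+4)
            = (((2*m+3).choose j * (2*m+3+1) : ℕ) : ℚ) := by push_cast; ring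
          _ = (((2*m+3+1).choose j * (2*m+3+1-j) : ℕ) : ℚ) := by rw [h]
          _ = ((2*m+4).choose j : ℚ) * ((2*m+4:ℚ) - j) := by
              rw [Nat.cast_mul, h4]
      linear_combination (-(bernoulli j)) * hcast
    rw [Finset.sum_congr rfl key, ← Finset.mul_sum]
    have hs : ∑ j ∈ Finset.range (2*m+4), (((2*m+3).choose j : ℚ)) * bernoulli j = 0 := by
      have : (2*m+4) = (2*m+3)+1 := by omega
      rw [this, Finset.sum_range_succ]
      have hz : ∑ j ∈ Finset.range (2*m+3), (((2*m+3).choose j : ℚ)) * bernoulli j = 0 := by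
        rw [sum_bernoulli]; simp
      rw [hz, bern_odd_zero (2*m+3) ⟨m+1, by ring⟩ (by omega)]; simp
    rw [hs, mul_zero]
  have h3 : ∑ j ∈ Finset.range (2*m+4), ((j:ℚ) - 1) * ((2*m+4).choose j) * bernoulli j = 0 := by
    have key : ∀ j ∈ Finset.range (2*m+4), ((j:ℚ) - 1) * ((2*m+4).choose j) * bernoulli j
        = ((2*m+4:ℚ) - 1) * (((2*m+4).choose j : ℚ) * bernoulli j)
          - ((2*m+4:ℚ) - j) * ((2*m+4).choose j) * bernoulli j := by
      intro j _; ring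
    rw [Finset.sum_congr rfl key, Finset.sum_sub_distrib, ← Finset.mul_sum, h1, h2]; ring
  have hsplit := sum_range_even_odd
    (fun j => ((j:ℚ) - 1) * ((2*m+4).choose j) * bernoulli j) (m+2)
  have h2m : 2*(m+2) = 2*m+4 := by ring
  rw [h2m] at hsplit ⊢
  rw [hsplit] at h3
  rw [← h3]
  refine Finset.sum_congr rfl fun g hg => ?_
  rcases Nat.eq_zero_or_pos g with hg0 | hg0
  · subst hg0; norm_num
  · have hb : bernoulli (2*g+1) = 0 := bern_odd_zero _ ⟨g, by ring⟩ (by omega)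
    rw [hb]
    push_cast
    ring

open Real

lemma iter_step {f f' : ℝ → ℝ} {s : Set ℝ} {x : ℝ} (hs : IsOpen s) (hx : x ∈ s)
    (hd : ∀ y ∈ s, HasDerivAt f (f' y) y) (m : ℕ) :
    iteratedDeriv (m + 1) f x = iteratedDeriv m f' x := by
  rw [iteratedDeriv_succ']
  exact Filter.EventuallyEq.iteratedDeriv_eq m
    (Filter.eventuallyEq_of_mem (hs.mem_nhds hx) fun y hy => (hd y hy).deriv)

lemma prodP (d m : ℕ) :
    ∏ i ∈ Finset.range m, (-(d : ℝ) - 1 - i)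
      = (-1) ^ m * ((d + m).factorial : ℝ) / d.factorial := by
  induction m with
  | zero => simp [div_self (Nat.cast_ne_zero.mpr (Nat.factorial_ne_zero d) : (d.factorial:ℝ) ≠ 0)]
  | succ m ih =>
    rw [Finset.prod_range_succ, ih]
    have : (d + (m + 1)).factorial = (d + m + 1) * (d + m).factorial := by
      rw [show d + (m+1) = (d+m)+1 by ring, Nat.factorial_succ]
    rw [this]
    have hd : (d.factorial : ℝ) ≠ 0 := Nat.cast_ne_zero.mpr (Nat.factorial_ne_zero d)
    field_simp
    push_cast
    ring

lemma hasDerivAt_zpow_shift (e : ℤ) (a y : ℝ) (hne : y + a ≠ 0) :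
    HasDerivAt (fun t => (t + a) ^ e) ((e : ℝ) * (y + a) ^ (e - 1)) y := by
  have h := (hasDerivAt_zpow e (y + a) (Or.inl hne)).comp y ((hasDerivAt_id y).add_const a)
  simpa [Function.comp_def] using h

lemma hasDerivAt_zpow_shift' (e : ℤ) (a y : ℝ) (hne : y - a ≠ 0) :
    HasDerivAt (fun t => (t - a) ^ e) ((e : ℝ) * (y - a) ^ (e - 1)) y := by
  have h := hasDerivAt_zpow_shift e (-a) y (by simpa [sub_eq_add_neg] using hne)
  simpa [sub_eq_add_neg] using h

lemma pair_iter {l0 : ℝ} (h0 : 0 < l0) :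
    ∀ (m : ℕ) (c : ℝ) (e : ℤ) (x : ℝ), x ∈ Set.Ioi l0 →
    iteratedDeriv m (fun y => c * ((y + l0) ^ e + (y - l0) ^ e)) x
      = (c * ∏ i ∈ Finset.range m, ((e : ℝ) - i)) * ((x + l0) ^ (e - m) + (x - l0) ^ (e - m)) := by
  intro m
  induction m with
  | zero => intro c e x _; simp
  | succ m ih =>
    intro c e x hx
    have hstep : iteratedDeriv (m + 1) (fun y => c * ((y + l0) ^ e + (y - l0) ^ e)) x
        = iteratedDeriv m (fun y => (c * e) * ((y + l0) ^ (e - 1) + (y - l0) ^ (e - 1))) x := by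
      apply iter_step isOpen_Ioi hx (m := m)
      intro y hy
      have hy' : l0 < y := hy
      have hy1 : y + l0 ≠ 0 := by nlinarith
      have hy2 : y - l0 ≠ 0 := sub_ne_zero.mpr (ne_of_gt hy')
      have d1 := hasDerivAt_zpow_shift e l0 y hy1
      have d2 := hasDerivAt_zpow_shift' e l0 y hy2
      exact ((d1.add d2).const_mul c).congr_deriv (by ring)
    rw [hstep, ih (c * e) (e - 1) x hx]
    have hprod : (e : ℝ) * ∏ i ∈ Finset.range m, (((e - 1 : ℤ) : ℝ) - i)
        = ∏ i ∈ Finset.range (m + 1), ((e : ℝ) - i) := by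
      rw [Finset.prod_range_succ' (fun i => (e : ℝ) - i) m]
      simp only [Nat.cast_zero, sub_zero, Nat.cast_add, Nat.cast_one]
      rw [mul_comm]
      congr 1
      exact Finset.prod_congr rfl fun i _ => by push_cast; ring
    rw [show e - ((m : ℕ) + 1 : ℕ) = e - 1 - m by push_cast; ring]
    rw [← hprod]
    ring

section terms

variable {l0 li : ℝ}

-- iterated derivatives of log (y+l0) + log (y-l0)
lemma iter_logpair (h0 : 0 < l0) (h1 : l0 < li) (m : ℕ) :
    iteratedDeriv (m + 1) (fun y => Real.log (y + l0) + Real.log (y - l0)) li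
      = iteratedDeriv m (fun y => (1 : ℝ) * ((y + l0) ^ (-1 : ℤ) + (y - l0) ^ (-1 : ℤ))) li := by
  apply iter_step isOpen_Ioi (Set.mem_Ioi.mpr h1)
  intro y hy
  have hy' : l0 < y := hy
  have hy1 : y + l0 ≠ 0 := by nlinarith
  have hy2 : y - l0 ≠ 0 := sub_ne_zero.mpr (ne_of_gt hy')
  have d1 : HasDerivAt (fun y : ℝ => Real.log (y + l0)) (1 / (y + l0)) y := by
    simpa using ((hasDerivAt_id y).add_const l0).log hy1
  have d2 : HasDerivAt (fun y : ℝ => Real.log (y - l0)) (1 / (y - l0)) y := by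
    simpa using ((hasDerivAt_id y).sub_const l0).log hy2
  refine (d1.add d2).congr_deriv ?_
  rw [zpow_neg_one, zpow_neg_one]
  field_simp

lemma iterF0_two (h0 : 0 < l0) (h1 : l0 < li) (m : ℕ) :
    iteratedDeriv (m + 2) (fun y => (y + l0) ^ 2 / 2 * Real.log (y + l0)
        + (y - l0) ^ 2 / 2 * Real.log (y - l0) - 2 * l0 ^ 2 * Real.log (2 * l0)
        - 3 / 2 * (y ^ 2 - l0 ^ 2)) li
      = iteratedDeriv m (fun y => Real.log (y + l0) + Real.log (y - l0)) li := by
  have step1 : iteratedDeriv (m + 2) (fun y => (y + l0) ^ 2 / 2 * Real.log (y + l0)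
        + (y - l0) ^ 2 / 2 * Real.log (y - l0) - 2 * l0 ^ 2 * Real.log (2 * l0)
        - 3 / 2 * (y ^ 2 - l0 ^ 2)) li
      = iteratedDeriv (m + 1) (fun y => (y + l0) * Real.log (y + l0) + (y + l0) / 2
          + ((y - l0) * Real.log (y - l0) + (y - l0) / 2) - 3 * y) li := by
    apply iter_step isOpen_Ioi (Set.mem_Ioi.mpr h1) (m := m + 1)
    intro y hy
    have hy' : l0 < y := hy
    have hy1 : y + l0 ≠ 0 := by nlinarith
    have hy2 : y - l0 ≠ 0 := sub_ne_zero.mpr (ne_of_gt hy')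
    have q1 : HasDerivAt (fun y : ℝ => (y + l0) ^ 2 / 2) (y + l0) y := by
      have h := (((hasDerivAt_id y).add_const l0).pow 2).div_const 2
      exact h.congr_deriv (by simp [id_eq])
    have q2 : HasDerivAt (fun y : ℝ => (y - l0) ^ 2 / 2) (y - l0) y := by
      have h := (((hasDerivAt_id y).sub_const l0).pow 2).div_const 2
      exact h.congr_deriv (by simp [id_eq])
    have d1 : HasDerivAt (fun y : ℝ => Real.log (y + l0)) (1 / (y + l0)) y := by
      simpa using ((hasDerivAt_id y).add_const l0).log hy1
    have d2 : HasDerivAt (fun y : ℝ => Real.log (y - l0)) (1 / (y - l0)) y := by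
      simpa using ((hasDerivAt_id y).sub_const l0).log hy2
    have p3 : HasDerivAt (fun y : ℝ => 3 / 2 * (y ^ 2 - l0 ^ 2)) (3 * y) y := by
      have h := ((hasDerivAt_pow 2 y).sub_const (l0 ^ 2)).const_mul (3 / 2 : ℝ)
      exact h.congr_deriv (by simp [id_eq]; ring)
    have main := (((q1.mul d1).add (q2.mul d2)).sub_const
        (2 * l0 ^ 2 * Real.log (2 * l0))).sub p3
    refine main.congr_deriv ?_
    field_simp
  rw [step1]
  apply iter_step isOpen_Ioi (Set.mem_Ioi.mpr h1)
  intro y hy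
  have hy' : l0 < y := hy
  have hy1 : y + l0 ≠ 0 := by nlinarith
  have hy2 : y - l0 ≠ 0 := sub_ne_zero.mpr (ne_of_gt hy')
  have d1 : HasDerivAt (fun y : ℝ => Real.log (y + l0)) (1 / (y + l0)) y := by
    simpa using ((hasDerivAt_id y).add_const l0).log hy1
  have d2 : HasDerivAt (fun y : ℝ => Real.log (y - l0)) (1 / (y - l0)) y := by
    simpa using ((hasDerivAt_id y).sub_const l0).log hy2
  have r1 : HasDerivAt (fun y : ℝ => (y + l0) * Real.log (y + l0))
      (Real.log (y + l0) + 1) y := by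
    have := ((hasDerivAt_id y).add_const l0).mul d1
    refine this.congr_deriv ?_
    field_simp
    simp only [id_eq]; ring
  have r2 : HasDerivAt (fun y : ℝ => (y - l0) * Real.log (y - l0))
      (Real.log (y - l0) + 1) y := by
    have := ((hasDerivAt_id y).sub_const l0).mul d2
    refine this.congr_deriv ?_
    field_simp
    simp only [id_eq]; ring
  have r3 : HasDerivAt (fun y : ℝ => (y + l0) / 2) (1 / 2 : ℝ) y := by
    simpa using ((hasDerivAt_id y).add_const l0).div_const 2
  have r4 : HasDerivAt (fun y : ℝ => (y - l0) / 2) (1 / 2 : ℝ) y := by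
    simpa using ((hasDerivAt_id y).sub_const l0).div_const 2
  have r5 : HasDerivAt (fun y : ℝ => 3 * y) (3 : ℝ) y := by
    simpa using (hasDerivAt_id y).const_mul (3 : ℝ)
  have main := (((r1.add r3).add ((r2.add r4))).sub r5)
  exact main.congr_deriv (by ring)

end terms

lemma iterF0_full (h0 : 0 < l0) (h1 : l0 < li) (j : ℕ) :
    iteratedDeriv (2 * j + 4) (fun y => (y + l0) ^ 2 / 2 * Real.log (y + l0)
        + (y - l0) ^ 2 / 2 * Real.log (y - l0) - 2 * l0 ^ 2 * Real.log (2 * l0)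
        - 3 / 2 * (y ^ 2 - l0 ^ 2)) li
      = -(((2 * j + 1).factorial : ℝ))
          * ((li + l0) ^ (-2 * (j : ℤ) - 2) + (li - l0) ^ (-2 * (j : ℤ) - 2)) := by
  rw [show 2 * j + 4 = (2 * j + 2) + 2 by ring]
  rw [iterF0_two h0 h1 (2 * j + 2), show 2 * j + 2 = (2 * j + 1) + 1 by ring,
    iter_logpair h0 h1 (2 * j + 1), pair_iter h0 (2 * j + 1) 1 (-1) li (Set.mem_Ioi.mpr h1)]
  have hprod : ∏ i ∈ Finset.range (2 * j + 1), (((-1 : ℤ) : ℝ) - i)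
      = -(((2 * j + 1).factorial : ℝ)) := by
    have := prodP 0 (2 * j + 1)
    simp only [Nat.cast_zero, zero_add, Nat.factorial_zero, Nat.cast_one, div_one] at this
    calc ∏ i ∈ Finset.range (2 * j + 1), (((-1 : ℤ) : ℝ) - i)
        = ∏ i ∈ Finset.range (2 * j + 1), (-(0:ℝ) - 1 - i) :=
          Finset.prod_congr rfl fun i _ => by push_cast; ring
      _ = -(((2 * j + 1).factorial : ℝ)) := by
          rw [this, pow_succ, pow_mul]; norm_num
  rw [hprod]
  rw [show (-1 : ℤ) - ((2 * j + 1 : ℕ) : ℤ) = -2 * (j : ℤ) - 2 by push_cast; ring]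
  ring

lemma iterF1_full (h0 : 0 < l0) (h1 : l0 < li) (j : ℕ) :
    iteratedDeriv (2 * j + 2) (fun y => -(1 / 12) * Real.log ((y ^ 2 - l0 ^ 2) / l0)) li
      = ((2 * j + 1).factorial : ℝ) / 12
          * ((li + l0) ^ (-2 * (j : ℤ) - 2) + (li - l0) ^ (-2 * (j : ℤ) - 2)) := by
  have heq : (fun y => -(1 / 12) * Real.log ((y ^ 2 - l0 ^ 2) / l0))
      =ᶠ[nhds li] (fun y => -(1 / 12) * (Real.log (y + l0) + Real.log (y - l0))
        + 1 / 12 * Real.log l0) := by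
    refine Filter.eventuallyEq_of_mem (Ioi_mem_nhds h1) fun y hy => ?_
    have hy' : l0 < y := hy
    have hy1 : (0:ℝ) < y + l0 := by nlinarith
    have hy2 : (0:ℝ) < y - l0 := by nlinarith
    rw [show y ^ 2 - l0 ^ 2 = (y + l0) * (y - l0) by ring, Real.log_div
      (by positivity) (ne_of_gt h0), Real.log_mul (ne_of_gt hy1) (ne_of_gt hy2)]
    ring
  rw [heq.iteratedDeriv_eq]
  rw [show 2 * j + 2 = (2 * j + 1) + 1 by ring]
  have hstep : iteratedDeriv ((2 * j + 1) + 1) (fun y => -(1 / 12) * (Real.log (y + l0)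
      + Real.log (y - l0)) + 1 / 12 * Real.log l0) li
      = iteratedDeriv (2 * j + 1)
          (fun y => (-(1/12) : ℝ) * ((y + l0) ^ (-1 : ℤ) + (y - l0) ^ (-1 : ℤ))) li := by
    apply iter_step isOpen_Ioi (Set.mem_Ioi.mpr h1)
    intro y hy
    have hy' : l0 < y := hy
    have hy1 : y + l0 ≠ 0 := by nlinarith
    have hy2 : y - l0 ≠ 0 := sub_ne_zero.mpr (ne_of_gt hy')
    have d1 : HasDerivAt (fun y : ℝ => Real.log (y + l0)) (1 / (y + l0)) y := by
      simpa using ((hasDerivAt_id y).add_const l0).log hy1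
    have d2 : HasDerivAt (fun y : ℝ => Real.log (y - l0)) (1 / (y - l0)) y := by
      simpa using ((hasDerivAt_id y).sub_const l0).log hy2
    have main := ((d1.add d2).const_mul (-(1/12) : ℝ)).add_const (1 / 12 * Real.log l0)
    refine main.congr_deriv ?_
    rw [zpow_neg_one, zpow_neg_one]
    field_simp
  rw [hstep, pair_iter h0 (2 * j + 1) (-(1/12)) (-1) li (Set.mem_Ioi.mpr h1)]
  have hprod : ∏ i ∈ Finset.range (2 * j + 1), (((-1 : ℤ) : ℝ) - i)
      = -(((2 * j + 1).factorial : ℝ)) := by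
    have := prodP 0 (2 * j + 1)
    simp only [Nat.cast_zero, zero_add, Nat.factorial_zero, Nat.cast_one, div_one] at this
    calc ∏ i ∈ Finset.range (2 * j + 1), (((-1 : ℤ) : ℝ) - i)
        = ∏ i ∈ Finset.range (2 * j + 1), (-(0:ℝ) - 1 - i) :=
          Finset.prod_congr rfl fun i _ => by push_cast; ring
      _ = -(((2 * j + 1).factorial : ℝ)) := by
          rw [this, pow_succ, pow_mul]; norm_num
  rw [hprod]
  rw [show (-1 : ℤ) - ((2 * j + 1 : ℕ) : ℤ) = -2 * (j : ℤ) - 2 by push_cast; ring]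
  ring

lemma iterFg_full (h0 : 0 < l0) (h1 : l0 < li) (j i : ℕ) (c : ℝ) :
    iteratedDeriv (2 * i + 2) (fun y => c * ((l0 + y) ^ (-2 * (j : ℤ) - 2)
        + (l0 - y) ^ (-2 * (j : ℤ) - 2) - (2 * l0) ^ (-2 * (j : ℤ) - 2))) li
      = c * (((2 * i + 2 * j + 3).factorial : ℝ) / ((2 * j + 1).factorial))
          * ((li + l0) ^ (-2 * (i : ℤ) - 2 * (j : ℤ) - 4)
            + (li - l0) ^ (-2 * (i : ℤ) - 2 * (j : ℤ) - 4)) := by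
  have heven : Even (-2 * (j : ℤ) - 2) := ⟨-(j : ℤ) - 1, by ring⟩
  have hfun : (fun y : ℝ => c * ((l0 + y) ^ (-2 * (j : ℤ) - 2)
        + (l0 - y) ^ (-2 * (j : ℤ) - 2) - (2 * l0) ^ (-2 * (j : ℤ) - 2)))
      = ((fun y : ℝ => c * ((y + l0) ^ (-2 * (j : ℤ) - 2) + (y - l0) ^ (-2 * (j : ℤ) - 2)))
          + (fun _ : ℝ => -(c * (2 * l0) ^ (-2 * (j : ℤ) - 2)))) := by
    funext y
    have h2 : (l0 - y) ^ (-2 * (j : ℤ) - 2) = (y - l0) ^ (-2 * (j : ℤ) - 2) := by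
      rw [show l0 - y = -(y - l0) by ring, heven.neg_zpow]
    simp only [Pi.add_apply]
    rw [h2, show l0 + y = y + l0 by ring]
    ring
  rw [hfun]
  rw [show 2 * i + 2 = (2 * i + 1) + 1 by ring]
  have hstep : iteratedDeriv ((2 * i + 1) + 1)
      ((fun y : ℝ => c * ((y + l0) ^ (-2 * (j : ℤ) - 2) + (y - l0) ^ (-2 * (j : ℤ) - 2)))
        + (fun _ : ℝ => -(c * (2 * l0) ^ (-2 * (j : ℤ) - 2)))) li
      = iteratedDeriv (2 * i + 1)
          (fun y => (c * ((-2 * (j : ℤ) - 2 : ℤ) : ℝ))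
            * ((y + l0) ^ (-2 * (j : ℤ) - 3) + (y - l0) ^ (-2 * (j : ℤ) - 3))) li := by
    apply iter_step isOpen_Ioi (Set.mem_Ioi.mpr h1)
    intro y hy
    have hy' : l0 < y := hy
    have hy1 : y + l0 ≠ 0 := by nlinarith
    have hy2 : y - l0 ≠ 0 := sub_ne_zero.mpr (ne_of_gt hy')
    have d1 := hasDerivAt_zpow_shift (-2 * (j : ℤ) - 2) l0 y hy1
    have d2 := hasDerivAt_zpow_shift' (-2 * (j : ℤ) - 2) l0 y hy2
    have main := (((d1.add d2).const_mul c).add_const (-(c * (2 * l0) ^ (-2 * (j : ℤ) - 2))))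
    refine main.congr_deriv ?_
    rw [show (-2 * (j : ℤ) - 2) - 1 = -2 * (j : ℤ) - 3 by ring]
    push_cast
    ring
  rw [hstep, pair_iter h0 (2 * i + 1) (c * ((-2 * (j : ℤ) - 2 : ℤ) : ℝ)) (-2 * (j : ℤ) - 3)
    li (Set.mem_Ioi.mpr h1)]
  have hprod : ∏ t ∈ Finset.range (2 * i + 1), (((-2 * (j : ℤ) - 3 : ℤ) : ℝ) - t)
      = -(((2 * j + 2 + (2 * i + 1)).factorial : ℝ) / ((2 * j + 2).factorial)) := by
    have := prodP (2 * j + 2) (2 * i + 1)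
    calc ∏ t ∈ Finset.range (2 * i + 1), (((-2 * (j : ℤ) - 3 : ℤ) : ℝ) - t)
        = ∏ t ∈ Finset.range (2 * i + 1), (-((2 * j + 2 : ℕ) : ℝ) - 1 - t) :=
          Finset.prod_congr rfl fun t _ => by push_cast; ring
      _ = -(((2 * j + 2 + (2 * i + 1)).factorial : ℝ) / ((2 * j + 2).factorial)) := by
          rw [this, pow_succ, pow_mul]; norm_num; ring
  rw [hprod]
  rw [show (-2 * (j : ℤ) - 3) - ((2 * i + 1 : ℕ) : ℤ) = -2 * (i : ℤ) - 2 * (j : ℤ) - 4 by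
    push_cast; ring]
  rw [show 2 * j + 2 + (2 * i + 1) = 2 * i + 2 * j + 3 by ring]
  have hf1 : ((2 * j + 2).factorial : ℝ) = (2 * j + 2) * ((2 * j + 1).factorial : ℝ) := by
    rw [show 2 * j + 2 = (2 * j + 1) + 1 by ring, Nat.factorial_succ]; push_cast; ring
  rw [hf1]
  have hne1 : ((2 * j + 1).factorial : ℝ) ≠ 0 := Nat.cast_ne_zero.mpr (Nat.factorial_ne_zero _)
  have hne2 : ((2 * j : ℝ) + 2) ≠ 0 := by positivity
  push_cast
  field_simp
  ring

lemma bern_two : bernoulli 2 = 1/6 := by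
  rw [bernoulli_eq_bernoulli'_of_ne_one (by norm_num), bernoulli'_two]

/-- (Kummer curve, direction λ∞) The free energy of the Kummer spectral curve
satisfies `F(λ₀, λ∞+ℏ) − 2F(λ₀,λ∞) + F(λ₀, λ∞−ℏ) = log((λ∞+λ₀)(λ∞−λ₀))`
order by order in `ℏ`. -/
theorem stmt14 (F : ℕ → ℝ → ℝ → ℝ)
    (hF0 : ∀ l0 li : ℝ, 0 < l0 → l0 < li →
      F 0 l0 li = (li + l0) ^ 2 / 2 * Real.log (li + l0)
        + (li - l0) ^ 2 / 2 * Real.log (li - l0)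
        - 2 * l0 ^ 2 * Real.log (2 * l0) - 3 / 2 * (li ^ 2 - l0 ^ 2))
    (hF1 : ∀ l0 li : ℝ, 0 < l0 → l0 < li →
      F 1 l0 li = -(1 / 12) * Real.log ((li ^ 2 - l0 ^ 2) / l0))
    (hFg : ∀ g : ℕ, 2 ≤ g → ∀ l0 li : ℝ, 0 < l0 → l0 < li →
      F g l0 li = (bernoulli (2 * g) : ℝ) / (2 * (g : ℝ) * (2 * (g : ℝ) - 2))
        * ((l0 + li) ^ (2 - 2 * (g : ℤ)) + (l0 - li) ^ (2 - 2 * (g : ℤ))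
            - (2 * l0) ^ (2 - 2 * (g : ℤ))))
    (n : ℕ) (hn : 1 ≤ n) (l0 li : ℝ) (h0 : 0 < l0) (h1 : l0 < li) :
    ∑ k ∈ Finset.Icc 1 n,
        2 / (Nat.factorial (2 * k) : ℝ) * iteratedDeriv (2 * k) (F (n - k) l0) li
      = if n = 1 then Real.log ((li + l0) * (li - l0)) else 0 := by
  have hev0 : F 0 l0 =ᶠ[nhds li] (fun y => (y + l0) ^ 2 / 2 * Real.log (y + l0)
      + (y - l0) ^ 2 / 2 * Real.log (y - l0) - 2 * l0 ^ 2 * Real.log (2 * l0)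
      - 3 / 2 * (y ^ 2 - l0 ^ 2)) :=
    Filter.eventuallyEq_of_mem (Ioi_mem_nhds h1) fun y hy => hF0 l0 y h0 hy
  by_cases hn1 : n = 1
  · subst hn1
    rw [if_pos rfl]
    rw [show Finset.Icc 1 1 = {1} from Finset.Icc_self 1, Finset.sum_singleton]
    simp only [show (1:ℕ) - 1 = 0 from rfl, show 2 * 1 = 2 from rfl]
    rw [hev0.iteratedDeriv_eq 2, show iteratedDeriv 2 _ li = _ from iterF0_two h0 h1 0,
      iteratedDeriv_zero, Real.log_mul (by nlinarith) (by nlinarith)]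
    norm_num [Nat.factorial]
  · rw [if_neg hn1]
    obtain ⟨N, rfl⟩ : ∃ N, n = N + 2 := ⟨n - 2, by omega⟩
    set S : ℝ := (li + l0) ^ (-2 * (N : ℤ) - 2) + (li - l0) ^ (-2 * (N : ℤ) - 2) with hS
    set Cst : ℝ := 2 * ((2 * N + 1).factorial : ℝ) / ((2 * N + 4).factorial : ℝ) with hCst
    have key : ∀ k ∈ Finset.Icc 1 (N + 2),
        2 / (Nat.factorial (2 * k) : ℝ) * iteratedDeriv (2 * k) (F (N + 2 - k) l0) li
        = ((((2 * (N + 2 - k) : ℕ) : ℚ) - 1)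
            * (((2 * (N + 2)).choose (2 * (N + 2 - k)) : ℕ) : ℚ)
            * bernoulli (2 * (N + 2 - k)) : ℚ) * Cst * S := by
      intro k hk
      rw [Finset.mem_Icc] at hk
      obtain ⟨hk1, hk2⟩ := hk
      rcases eq_or_ne k (N + 2) with hke | hke1
      · -- g = 0
        subst hke
        rw [show N + 2 - (N + 2) = 0 from by omega]
        rw [hev0.iteratedDeriv_eq, show 2 * (N + 2) = 2 * N + 4 from by ring,
          iterF0_full h0 h1 N]
        rw [show (2:ℕ) * 0 = 0 from rfl]
        simp only [Nat.choose_zero_right, Nat.cast_zero, Nat.cast_one, bernoulli_zero]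
        push_cast
        rw [hCst, hS]
        simp only [div_eq_mul_inv]
        ring
      · rcases eq_or_ne k (N + 1) with hke2 | hke2
        · -- g = 1
          subst hke2
          rw [show N + 2 - (N + 1) = 1 from by omega]
          have hev1 : F 1 l0 =ᶠ[nhds li]
              (fun y => -(1 / 12) * Real.log ((y ^ 2 - l0 ^ 2) / l0)) :=
            Filter.eventuallyEq_of_mem (Ioi_mem_nhds h1) fun y hy => hF1 l0 y h0 hy
          rw [hev1.iteratedDeriv_eq, show 2 * (N + 1) = 2 * N + 2 from by ring,
            iterF1_full h0 h1 N]
          rw [show (2:ℕ) * 1 = 2 from rfl, bern_two]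
          have hc := Nat.choose_mul_factorial_mul_factorial (show 2 ≤ 2 * (N + 2) by omega)
          rw [show 2 * (N + 2) - 2 = 2 * N + 2 from by omega,
            show (2:ℕ).factorial = 2 from rfl] at hc
          have hcR : (((2 * (N + 2)).choose 2 : ℕ) : ℝ) * 2 * ((2 * N + 2).factorial : ℝ)
              = ((2 * N + 4).factorial : ℝ) := by
            rw [show 2 * N + 4 = 2 * (N + 2) from by ring]
            exact_mod_cast congrArg (Nat.cast (R := ℝ)) hc
          rw [hCst, hS]
          have hne1 : ((2 * N + 2).factorial : ℝ) ≠ 0 := Nat.cast_ne_zero.mpr (Nat.factorial_ne_zero _)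
          have hne3 : (((2 * (N + 2)).choose 2 : ℕ) : ℝ) ≠ 0 := by
            exact Nat.cast_ne_zero.mpr (Nat.choose_pos (by omega)).ne'
          rw [← hcR]
          push_cast
          field_simp
          ring
        · -- g ≥ 2
          obtain ⟨i, rfl⟩ : ∃ i, k = i + 1 := ⟨k - 1, by omega⟩
          obtain ⟨j, hj⟩ : ∃ j, N + 2 - (i + 1) = j + 2 := ⟨N - 1 - i, by omega⟩
          have hij : i + j + 1 = N := by omega
          rw [hj]
          have hev2 : F (j + 2) l0 =ᶠ[nhds li]
              (fun y => ((bernoulli (2 * (j + 2)) : ℝ)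
                  / (2 * ((j + 2 : ℕ) : ℝ) * (2 * ((j + 2 : ℕ) : ℝ) - 2)))
                * ((l0 + y) ^ (-2 * (j : ℤ) - 2) + (l0 - y) ^ (-2 * (j : ℤ) - 2)
                  - (2 * l0) ^ (-2 * (j : ℤ) - 2))) := by
            refine Filter.eventuallyEq_of_mem (Ioi_mem_nhds h1) fun y hy => ?_
            rw [hFg (j + 2) (by omega) l0 y h0 hy]
            rw [show 2 - 2 * ((j + 2 : ℕ) : ℤ) = -2 * (j : ℤ) - 2 from by push_cast; ring]
          rw [hev2.iteratedDeriv_eq, show 2 * (i + 1) = 2 * i + 2 from by ring,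
            iterFg_full h0 h1 j i _]
          rw [show 2 * i + 2 * j + 3 = 2 * N + 1 from by omega]
          rw [show -2 * (i : ℤ) - 2 * (j : ℤ) - 4 = -2 * (N : ℤ) - 2 from by
            have : ((i : ℤ) + j + 1) = (N : ℤ) := by exact_mod_cast congrArg (Nat.cast (R := ℤ)) hij
            linarith]
          have hc := Nat.choose_mul_factorial_mul_factorial
            (show 2 * (j + 2) ≤ 2 * (N + 2) by omega)
          rw [show 2 * (N + 2) - 2 * (j + 2) = 2 * i + 2 from by omega] at hc
          have hcR : (((2 * (N + 2)).choose (2 * (j + 2)) : ℕ) : ℝ)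
              * ((2 * j + 4).factorial : ℝ) * ((2 * i + 2).factorial : ℝ)
              = ((2 * N + 4).factorial : ℝ) := by
            rw [show 2 * N + 4 = 2 * (N + 2) from by ring,
              show 2 * j + 4 = 2 * (j + 2) from by ring]
            exact_mod_cast congrArg (Nat.cast (R := ℝ)) hc
          rw [hCst, hS]
          have hne1 : ((2 * i + 2).factorial : ℝ) ≠ 0 := Nat.cast_ne_zero.mpr (Nat.factorial_ne_zero _)
          have hne2 : ((2 * j + 1).factorial : ℝ) ≠ 0 := Nat.cast_ne_zero.mpr (Nat.factorial_ne_zero _)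
          have hfact : ((2 * j + 4).factorial : ℝ)
              = (2 * (j:ℝ) + 4) * (2 * (j:ℝ) + 3) * (2 * (j:ℝ) + 2) * ((2 * j + 1).factorial : ℝ) := by
            rw [show 2 * j + 4 = (2 * j + 3) + 1 from by ring, Nat.factorial_succ,
              show 2 * j + 3 = (2 * j + 2) + 1 from by ring, Nat.factorial_succ,
              show 2 * j + 2 = (2 * j + 1) + 1 from by ring, Nat.factorial_succ]
            push_cast
            ring
          rw [← hcR, hfact]
          push_cast
          have hne3 : (((2 * (N + 2)).choose (2 * (j + 2)) : ℕ) : ℝ) ≠ 0 := by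
            exact Nat.cast_ne_zero.mpr (Nat.choose_pos (by omega)).ne'
          have hp1 : (2 * ((j:ℝ) + 2)) ≠ 0 := by positivity
          have hp2 : (2 * (j:ℝ) + 3) ≠ 0 := by positivity
          have hp4 : (2 * ((j:ℝ) + 2) - 2) ≠ 0 := by
            rw [show 2 * ((j:ℝ) + 2) - 2 = 2 * (j:ℝ) + 2 from by ring]; positivity
          have hp5 : ((j:ℝ) + 1) ≠ 0 := by positivity
          have hp6 : (1 + (j:ℝ)) ≠ 0 := by positivity
          field_simp
          ring_nf
          field_simp
          ring
    rw [Finset.sum_congr rfl key]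
    have hre : ∑ k ∈ Finset.Icc 1 (N + 2),
        (((((2 * (N + 2 - k) : ℕ) : ℚ) - 1)
            * (((2 * (N + 2)).choose (2 * (N + 2 - k)) : ℕ) : ℚ)
            * bernoulli (2 * (N + 2 - k)) : ℚ))
        = ∑ g ∈ Finset.range (N + 2),
        (((((2 * g : ℕ) : ℚ) - 1) * (((2 * (N + 2)).choose (2 * g) : ℕ) : ℚ)
            * bernoulli (2 * g) : ℚ)) := by
      apply Finset.sum_bij' (fun k _ => N + 2 - k) (fun g _ => N + 2 - g)
      · intro a ha; simp only [Finset.mem_Icc] at ha; simp only [Finset.mem_range]; omega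
      · intro a ha; simp only [Finset.mem_range] at ha; simp only [Finset.mem_Icc]; omega
      · intro a ha; simp only [Finset.mem_Icc] at ha; omega
      · intro a ha; simp only [Finset.mem_range] at ha; omega
      · intro a ha; rfl
    have hzero : ∑ g ∈ Finset.range (N + 2),
        (((((2 * g : ℕ) : ℚ) - 1) * (((2 * (N + 2)).choose (2 * g) : ℕ) : ℚ)
            * bernoulli (2 * g) : ℚ)) = 0 := by
      have := bern_id N
      convert this using 2 with g
      push_cast
      ring
    calc ∑ k ∈ Finset.Icc 1 (N + 2),
          (((((2 * (N + 2 - k) : ℕ) : ℚ) - 1)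
            * (((2 * (N + 2)).choose (2 * (N + 2 - k)) : ℕ) : ℚ)
            * bernoulli (2 * (N + 2 - k)) : ℚ) : ℝ) * Cst * S
        = ((∑ k ∈ Finset.Icc 1 (N + 2),
            ((((2 * (N + 2 - k) : ℕ) : ℚ) - 1)
            * (((2 * (N + 2)).choose (2 * (N + 2 - k)) : ℕ) : ℚ)
            * bernoulli (2 * (N + 2 - k)) : ℚ) : ℚ) : ℝ) * Cst * S := by
          rw [← Finset.sum_mul, ← Finset.sum_mul, Rat.cast_sum]
      _ = 0 := by rw [hre, hzero]; norm_num
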